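/- The composite δ*δ_! : sSet → sSet, where δ_! is the left adjoint of the diagonal functor δ* on bisimplicial sets, preserves monomorphisms of simplicial sets. -/

import Mathlib

open CategoryTheory

noncomputable section

namespace Paper

/-- The diagonal of the simplex category; restriction along it is the diagonal functor
`δ* : bisSet ⥤ sSet`, and its left Kan extension along it is `δ_! : sSet ⥤ bisSet`. -/
abbrev simplexDiag : SimplexCategoryᵒᵖ ⥤ SimplexCategoryᵒᵖ × SimplexCategoryᵒᵖ :=
  Functor.diag SimplexCategoryᵒᵖ

open Limits Opposite
namespace Aux

open SimplexCategory

variable {a b c : SimplexCategory}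

/-- minimal section of a surjective hom -/
noncomputable def minSec (φ : a ⟶ b) (hs : Function.Surjective φ.toOrderHom) : b ⟶ a :=
  SimplexCategory.Hom.mk
    { toFun := fun j => (Finset.univ.filter (fun i => φ.toOrderHom i = j)).min'
        (by obtain ⟨i, hi⟩ := hs j; exact ⟨i, by simp [hi]⟩)
      monotone' := by
        intro j j' hj
        by_contra h
        push_neg at h
        set s := fun j => (Finset.univ.filter (fun i => φ.toOrderHom i = j)).min'
          (by obtain ⟨i, hi⟩ := hs j; exact ⟨i, by simp [hi]⟩)
        have h1 : φ.toOrderHom (s j) = j := by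
          have := Finset.min'_mem (Finset.univ.filter (fun i => φ.toOrderHom i = j))
            (by obtain ⟨i, hi⟩ := hs j; exact ⟨i, by simp [hi]⟩)
          simpa using this
        have h2 : φ.toOrderHom (s j') = j' := by
          have := Finset.min'_mem (Finset.univ.filter (fun i => φ.toOrderHom i = j'))
            (by obtain ⟨i, hi⟩ := hs j'; exact ⟨i, by simp [hi]⟩)
          simpa using this
        have := φ.toOrderHom.monotone (le_of_lt h)
        rw [h1, h2] at this
        have hjj : j = j' := le_antisymm hj this
        subst hjj
        exact lt_irrefl _ h }

lemma minSec_comp (φ : a ⟶ b) (hs : Function.Surjective φ.toOrderHom) :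
    minSec φ hs ≫ φ = 𝟙 b := by
  ext j : 3
  have := Finset.min'_mem (Finset.univ.filter (fun i => φ.toOrderHom i = j))
    (by obtain ⟨i, hi⟩ := hs j; exact ⟨i, by simp [hi]⟩)
  simp [minSec]; exact (by simpa using this : φ.toOrderHom _ = j)

lemma minSec_le (φ : a ⟶ b) (hs : Function.Surjective φ.toOrderHom) (i : Fin (a.len + 1)) :
    (minSec φ hs).toOrderHom (φ.toOrderHom i) ≤ i := by
  apply Finset.min'_le
  simp

/-- maximal section of a surjective hom -/
noncomputable def maxSec (φ : a ⟶ b) (hs : Function.Surjective φ.toOrderHom) : b ⟶ a :=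
  SimplexCategory.Hom.mk
    { toFun := fun j => (Finset.univ.filter (fun i => φ.toOrderHom i = j)).max'
        (by obtain ⟨i, hi⟩ := hs j; exact ⟨i, by simp [hi]⟩)
      monotone' := by
        intro j j' hj
        by_contra h
        push_neg at h
        set s := fun j => (Finset.univ.filter (fun i => φ.toOrderHom i = j)).max'
          (by obtain ⟨i, hi⟩ := hs j; exact ⟨i, by simp [hi]⟩)
        have h1 : φ.toOrderHom (s j) = j := by
          have := Finset.max'_mem (Finset.univ.filter (fun i => φ.toOrderHom i = j))
            (by obtain ⟨i, hi⟩ := hs j; exact ⟨i, by simp [hi]⟩)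
          simpa using this
        have h2 : φ.toOrderHom (s j') = j' := by
          have := Finset.max'_mem (Finset.univ.filter (fun i => φ.toOrderHom i = j'))
            (by obtain ⟨i, hi⟩ := hs j'; exact ⟨i, by simp [hi]⟩)
          simpa using this
        have := φ.toOrderHom.monotone (le_of_lt h)
        rw [h1, h2] at this
        have hjj : j = j' := le_antisymm hj this
        subst hjj
        exact lt_irrefl _ h }

lemma maxSec_comp (φ : a ⟶ b) (hs : Function.Surjective φ.toOrderHom) :
    maxSec φ hs ≫ φ = 𝟙 b := by
  ext j : 3
  have := Finset.max'_mem (Finset.univ.filter (fun i => φ.toOrderHom i = j))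
    (by obtain ⟨i, hi⟩ := hs j; exact ⟨i, by simp [hi]⟩)
  simp [maxSec]; exact (by simpa using this : φ.toOrderHom _ = j)

lemma le_maxSec (φ : a ⟶ b) (hs : Function.Surjective φ.toOrderHom) (i : Fin (a.len + 1)) :
    i ≤ (maxSec φ hs).toOrderHom (φ.toOrderHom i) := by
  apply Finset.le_max'
  simp

/-- an epi is determined by the fact that min and max sections are sections -/
lemma epi_eq_of_sections (σ τ : a ⟶ b) (hσ : Function.Surjective σ.toOrderHom)
    (hmin : minSec σ hσ ≫ τ = 𝟙 b) (hmax : maxSec σ hσ ≫ τ = 𝟙 b) : σ = τ := by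
  ext i : 3
  have h1 : τ.toOrderHom ((minSec σ hσ).toOrderHom (σ.toOrderHom i)) = σ.toOrderHom i := by
    have := congr_arg (fun (f : b ⟶ b) => f.toOrderHom (σ.toOrderHom i)) hmin
    simpa using this
  have h2 : τ.toOrderHom ((maxSec σ hσ).toOrderHom (σ.toOrderHom i)) = σ.toOrderHom i := by
    have := congr_arg (fun (f : b ⟶ b) => f.toOrderHom (σ.toOrderHom i)) hmax
    simpa using this
  have l1 : σ.toOrderHom i ≤ τ.toOrderHom i := by
    rw [← h1]; exact τ.toOrderHom.monotone (minSec_le σ hσ i)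
  have l2 : τ.toOrderHom i ≤ σ.toOrderHom i := by
    rw [← h2]; exact τ.toOrderHom.monotone (le_maxSec σ hσ i)
  exact le_antisymm l1 l2

lemma surj_comp {σ : a ⟶ b} {τ : b ⟶ c} (hσ : Function.Surjective σ.toOrderHom)
    (hτ : Function.Surjective τ.toOrderHom) :
    Function.Surjective (σ ≫ τ).toOrderHom := by
  intro j
  obtain ⟨i, hi⟩ := hτ j
  obtain ⟨i', hi'⟩ := hσ i
  exact ⟨i', by simp [hi', hi]⟩

variable (Z : SSet)

/-- degenerate simplex -/
def Deg {m : SimplexCategory} (x : Z.obj (op m)) : Prop :=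
  ∃ (m' : SimplexCategory) (σ : m ⟶ m') (y : Z.obj (op m')),
    Function.Surjective σ.toOrderHom ∧ m'.len < m.len ∧ x = Z.map σ.op y

lemma ez_exists_aux : ∀ (n : ℕ), ∀ {m : SimplexCategory}, m.len = n → ∀ (x : Z.obj (op m)),
    ∃ (p : SimplexCategory) (σ : m ⟶ p) (y : Z.obj (op p)),
      Function.Surjective σ.toOrderHom ∧ ¬ Deg Z y ∧ x = Z.map σ.op y := by
  intro n
  induction n using Nat.strong_induction_on with
  | _ n IH =>
    intro m hm x
    by_cases hx : Deg Z x
    · obtain ⟨m', σ, y, hσ, hlt, hxy⟩ := hx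
      obtain ⟨p, τ, z, hτ, hz, hyz⟩ := IH m'.len (hm ▸ hlt) rfl y
      refine ⟨p, σ ≫ τ, z, surj_comp hσ hτ, hz, ?_⟩
      rw [hxy, hyz, op_comp, Z.map_comp]
      rfl
    · exact ⟨m, 𝟙 m, x, Function.surjective_id, hx, by simp⟩

lemma ez_exists {m : SimplexCategory} (x : Z.obj (op m)) :
    ∃ (p : SimplexCategory) (σ : m ⟶ p) (y : Z.obj (op p)),
      Function.Surjective σ.toOrderHom ∧ ¬ Deg Z y ∧ x = Z.map σ.op y :=
  ez_exists_aux Z m.len rfl x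

lemma nondeg_len_le {m p q : SimplexCategory} (σ : m ⟶ p) (τ : m ⟶ q)
    (y : Z.obj (op p)) (z : Z.obj (op q))
    (hσ : Function.Surjective σ.toOrderHom) (hy : ¬ Deg Z y)
    (h : Z.map σ.op y = Z.map τ.op z) : p.len ≤ q.len := by
  -- y is obtained from z by pulling back along d ≫ τ
  set d := minSec σ hσ
  have hd : d ≫ σ = 𝟙 p := minSec_comp σ hσ
  have hy' : y = Z.map ((d ≫ τ).op) z := by
    have : y = Z.map ((d ≫ σ).op) y := by rw [hd]; simp
    rw [op_comp, Z.map_comp] at this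
    calc y = Z.map d.op (Z.map σ.op y) := this
    _ = Z.map d.op (Z.map τ.op z) := by rw [h]
    _ = Z.map ((d ≫ τ).op) z := by rw [op_comp, Z.map_comp]; rfl
  set θ := d ≫ τ
  have hfac : θ = factorThruImage θ ≫ image.ι θ := by simp
  by_contra hlt
  push_neg at hlt
  have himg : (image θ).len ≤ q.len := len_le_of_mono (image.ι θ)
  have hesurj : Function.Surjective (factorThruImage θ).toOrderHom :=
    epi_iff_surjective.mp inferInstance
  apply hy
  have hwit : y = Z.map (factorThruImage θ).op (Z.map (image.ι θ).op z) := by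
    rw [hy']; conv_lhs => rw [hfac]
    rw [op_comp, Z.map_comp]; rfl
  exact ⟨image θ, factorThruImage θ, Z.map (image.ι θ).op z, hesurj,
    lt_of_le_of_lt himg hlt, hwit⟩

lemma ez_unique {m p q : SimplexCategory} (σ : m ⟶ p) (τ : m ⟶ q)
    (y : Z.obj (op p)) (z : Z.obj (op q))
    (hσ : Function.Surjective σ.toOrderHom) (hτ : Function.Surjective τ.toOrderHom)
    (hy : ¬ Deg Z y) (hz : ¬ Deg Z z)
    (h : Z.map σ.op y = Z.map τ.op z) :
    (⟨p, σ, y⟩ : Σ (p : SimplexCategory), (m ⟶ p) × Z.obj (op p)) = ⟨q, τ, z⟩ := by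
  have hpq : p = q := by
    have h1 := nondeg_len_le Z σ τ y z hσ hy h
    have h2 := nondeg_len_le Z τ σ z y hτ hz h.symm
    exact SimplexCategory.ext (le_antisymm h1 h2)
  subst hpq
  -- now both land in p
  have key : ∀ (d : p ⟶ m), d ≫ σ = 𝟙 p → (d ≫ τ = 𝟙 p ∧ y = z) := by
    intro d hd
    have hy' : y = Z.map ((d ≫ τ).op) z := by
      have : y = Z.map ((d ≫ σ).op) y := by rw [hd]; simp
      rw [op_comp, Z.map_comp] at this
      calc y = Z.map d.op (Z.map σ.op y) := this
      _ = Z.map d.op (Z.map τ.op z) := by rw [h]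
      _ = Z.map ((d ≫ τ).op) z := by rw [op_comp, Z.map_comp]; rfl
    set θ := d ≫ τ with hθ
    have hfac : θ = factorThruImage θ ≫ image.ι θ := by simp
    -- the image of θ has full size, else y degenerate
    have himg : (image θ).len ≤ p.len := len_le_of_mono (image.ι θ)
    have hesurj : Function.Surjective (factorThruImage θ).toOrderHom :=
      epi_iff_surjective.mp inferInstance
    have hfull : (image θ).len = p.len := by
      by_contra hne
      have hlt : (image θ).len < p.len := lt_of_le_of_ne himg hne
      apply hy
      have hwit : y = Z.map (factorThruImage θ).op (Z.map (image.ι θ).op z) := by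
        rw [hy']; conv_lhs => rw [hfac]
        rw [op_comp, Z.map_comp]; rfl
      exact ⟨image θ, factorThruImage θ, Z.map (image.ι θ).op z, hesurj, hlt, hwit⟩
    -- hence factorThruImage is bijective, so θ is mono, so θ = 𝟙
    have hbij : Function.Bijective (factorThruImage θ).toOrderHom := by
      rw [Fintype.bijective_iff_surjective_and_card]
      exact ⟨hesurj, by simp [hfull]⟩
    have hmono_e : Mono (factorThruImage θ) := mono_iff_injective.mpr hbij.injective
    have hmono : Mono θ := by rw [hfac]; exact mono_comp _ _
    have hid : θ = 𝟙 p := eq_id_of_mono θ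
    refine ⟨hid, ?_⟩
    rw [hy', hid]
    simp
  have hmin := key (minSec σ hσ) (minSec_comp σ hσ)
  have hmax := key (maxSec σ hσ) (maxSec_comp σ hσ)
  have : σ = τ := epi_eq_of_sections σ τ hσ hmin.1 hmax.1
  rw [this, hmin.2]

lemma nonDeg_map {X Y : SSet} (u : X ⟶ Y) (hu : ∀ c, Function.Injective (u.app c))
    {m : SimplexCategory} {x : X.obj (op m)} (hx : ¬ Deg X x) :
    ¬ Deg Y (u.app (op m) x) := by
  rintro ⟨m', σ, y', hσ, hlt, heq⟩
  set d := minSec σ hσ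
  have hd : d ≫ σ = 𝟙 m' := minSec_comp σ hσ
  have hid : Y.map d.op (Y.map σ.op y') = y' := by
    rw [← types_comp_apply (Y.map σ.op) (Y.map d.op), ← Y.map_comp, ← op_comp, hd]
    simp
  have hy' : y' = Y.map d.op (u.app (op m) x) := by rw [heq, hid]
  have hy'' : y' = u.app (op m') (X.map d.op x) := by
    rw [hy']
    exact (ConcreteCategory.congr_hom (u.naturality d.op) x).symm
  apply hx
  refine ⟨m', σ, X.map d.op x, hσ, hlt, ?_⟩
  apply hu (op m)
  rw [heq, hy'']
  simpa using (congr_fun (u.naturality σ.op) (X.map d.op x)).symm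

/-- the Eilenberg–Zilber decomposition of a simplex -/
noncomputable def ez {m : SimplexCategory} (x : Z.obj (op m)) :
    Σ (p : SimplexCategory), (m ⟶ p) × Z.obj (op p) :=
  ⟨(ez_exists Z x).choose, (ez_exists Z x).choose_spec.choose,
    (ez_exists Z x).choose_spec.choose_spec.choose⟩

lemma ez_spec {m : SimplexCategory} (x : Z.obj (op m)) :
    Function.Surjective ((ez Z x).2.1).toOrderHom ∧ ¬ Deg Z (ez Z x).2.2 ∧
      x = Z.map ((ez Z x).2.1).op (ez Z x).2.2 :=
  (ez_exists Z x).choose_spec.choose_spec.choose_spec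

lemma ez_eq {m p : SimplexCategory} {x : Z.obj (op m)} (σ : m ⟶ p) (y : Z.obj (op p))
    (hσ : Function.Surjective σ.toOrderHom) (hy : ¬ Deg Z y) (hx : x = Z.map σ.op y) :
    ez Z x = ⟨p, σ, y⟩ := by
  obtain ⟨h1, h2, h3⟩ := ez_spec Z x
  exact ez_unique Z _ σ _ y h1 hσ h2 hy (h3.symm.trans hx)

section JointImage

variable {a b b' : SimplexCategory}

/-- the joint image of a pair of maps, as a finset -/
def jset (f g : a ⟶ b) : Finset (Fin (b.len + 1)) :=
  Finset.image f.toOrderHom Finset.univ ∪ Finset.image g.toOrderHom Finset.univ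

lemma jset_nonempty (f g : a ⟶ b) : (jset f g).Nonempty :=
  ⟨f.toOrderHom 0, by simp [jset]⟩

/-- the dimension of the joint image -/
def jlen (f g : a ⟶ b) : ℕ := (jset f g).card - 1

lemma jcard (f g : a ⟶ b) : (jset f g).card = jlen f g + 1 :=
  (Nat.succ_pred_eq_of_pos (Finset.card_pos.mpr (jset_nonempty f g))).symm

lemma mem_jset_left (f g : a ⟶ b) (i : Fin (a.len + 1)) : f.toOrderHom i ∈ jset f g := by
  simp [jset]

lemma mem_jset_right (f g : a ⟶ b) (i : Fin (a.len + 1)) : g.toOrderHom i ∈ jset f g := by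
  simp [jset]

/-- the order isomorphism enumerating the joint image -/
noncomputable def jiso (f g : a ⟶ b) : Fin (jlen f g + 1) ≃o (jset f g : Finset (Fin (b.len+1))) :=
  (jset f g).orderIsoOfFin (jcard f g)

/-- the inclusion of the joint image -/
noncomputable def jincl (f g : a ⟶ b) : SimplexCategory.mk (jlen f g) ⟶ b :=
  SimplexCategory.Hom.mk
    { toFun := fun i => (jiso f g i : Fin (b.len + 1))
      monotone' := fun i j h => Subtype.coe_le_coe.mpr ((jiso f g).monotone h) }

lemma jincl_injective (f g : a ⟶ b) : Function.Injective (jincl f g).toOrderHom := by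
  intro i j h
  apply (jiso f g).injective
  exact Subtype.ext h

lemma jincl_mem (f g : a ⟶ b) (i) : (jincl f g).toOrderHom i ∈ jset f g :=
  (jiso f g i).2

/-- the first factorization through the joint image -/
noncomputable def jfac₁ (f g : a ⟶ b) : a ⟶ SimplexCategory.mk (jlen f g) :=
  SimplexCategory.Hom.mk
    { toFun := fun i => (jiso f g).symm ⟨f.toOrderHom i, mem_jset_left f g i⟩
      monotone' := fun i j h => (jiso f g).symm.monotone
        (Subtype.mk_le_mk.mpr (f.toOrderHom.monotone h)) }

/-- the second factorization through the joint image -/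
noncomputable def jfac₂ (f g : a ⟶ b) : a ⟶ SimplexCategory.mk (jlen f g) :=
  SimplexCategory.Hom.mk
    { toFun := fun i => (jiso f g).symm ⟨g.toOrderHom i, mem_jset_right f g i⟩
      monotone' := fun i j h => (jiso f g).symm.monotone
        (Subtype.mk_le_mk.mpr (g.toOrderHom.monotone h)) }

lemma jfac₁_comp (f g : a ⟶ b) : jfac₁ f g ≫ jincl f g = f := by
  ext i : 3
  show ((jiso f g) ((jiso f g).symm ⟨f.toOrderHom i, _⟩) : Fin (b.len+1)) = f.toOrderHom i
  rw [OrderIso.apply_symm_apply]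

lemma jfac₂_comp (f g : a ⟶ b) : jfac₂ f g ≫ jincl f g = g := by
  ext i : 3
  show ((jiso f g) ((jiso f g).symm ⟨g.toOrderHom i, _⟩) : Fin (b.len+1)) = g.toOrderHom i
  rw [OrderIso.apply_symm_apply]

section Rel

variable (φ : b' ⟶ b) (f' g' : a ⟶ b')

lemma jset_comp : jset (f' ≫ φ) (g' ≫ φ) = Finset.image φ.toOrderHom (jset f' g') := by
  have h1 : ∀ i, (f' ≫ φ).toOrderHom i = φ.toOrderHom (f'.toOrderHom i) := fun i => rfl
  have h2 : ∀ i, (g' ≫ φ).toOrderHom i = φ.toOrderHom (g'.toOrderHom i) := fun i => rfl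
  simp only [jset, Finset.image_union, Finset.image_image]
  congr 1 <;> apply Finset.image_congr <;> intro i _ <;> simp [h1, h2, Function.comp]

lemma jincl_mem' (i) : φ.toOrderHom ((jincl f' g').toOrderHom i) ∈ jset (f' ≫ φ) (g' ≫ φ) := by
  rw [jset_comp]
  exact Finset.mem_image_of_mem _ (jincl_mem f' g' i)

/-- the comparison epi between joint images -/
noncomputable def jepi : SimplexCategory.mk (jlen f' g') ⟶ SimplexCategory.mk (jlen (f' ≫ φ) (g' ≫ φ)) :=
  SimplexCategory.Hom.mk
    { toFun := fun i => (jiso (f' ≫ φ) (g' ≫ φ)).symm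
        ⟨φ.toOrderHom ((jincl f' g').toOrderHom i), jincl_mem' φ f' g' i⟩
      monotone' := fun i j h => (jiso _ _).symm.monotone
        (Subtype.mk_le_mk.mpr (φ.toOrderHom.monotone ((jincl f' g').toOrderHom.monotone h))) }

lemma jepi_comp : jepi φ f' g' ≫ jincl (f' ≫ φ) (g' ≫ φ) = jincl f' g' ≫ φ := by
  ext i : 3
  show ((jiso (f' ≫ φ) (g' ≫ φ)) ((jiso (f' ≫ φ) (g' ≫ φ)).symm
    ⟨φ.toOrderHom ((jincl f' g').toOrderHom i), jincl_mem' φ f' g' i⟩) : Fin (b.len+1)) =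
    φ.toOrderHom ((jincl f' g').toOrderHom i)
  rw [OrderIso.apply_symm_apply]

lemma jepi_surjective : Function.Surjective (jepi φ f' g').toOrderHom := by
  intro t
  set v : Fin (b.len+1) := ((jiso (f' ≫ φ) (g' ≫ φ)) t : Fin (b.len+1)) with hv
  have ht : v ∈ jset (f' ≫ φ) (g' ≫ φ) := (jiso _ _ t).2
  rw [jset_comp] at ht
  obtain ⟨s, hs, hst⟩ := Finset.mem_image.mp ht
  refine ⟨(jiso f' g').symm ⟨s, hs⟩, ?_⟩
  have hr : (jincl f' g').toOrderHom ((jiso f' g').symm ⟨s, hs⟩) = s := by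
    show ((jiso f' g') ((jiso f' g').symm ⟨s, hs⟩) : Fin (b'.len+1)) = s
    rw [OrderIso.apply_symm_apply]
  apply ((jiso (f' ≫ φ) (g' ≫ φ)).symm_apply_eq).mpr
  apply Subtype.ext
  show φ.toOrderHom ((jincl f' g').toOrderHom ((jiso f' g').symm ⟨s, hs⟩)) =
    ((jiso (f' ≫ φ) (g' ≫ φ)) t : Fin (b.len+1))
  rw [hr, hst]

lemma jfac₁_jepi : jfac₁ f' g' ≫ jepi φ f' g' = jfac₁ (f' ≫ φ) (g' ≫ φ) := by
  have h : (jfac₁ f' g' ≫ jepi φ f' g') ≫ jincl (f' ≫ φ) (g' ≫ φ) =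
      jfac₁ (f' ≫ φ) (g' ≫ φ) ≫ jincl (f' ≫ φ) (g' ≫ φ) := by
    rw [Category.assoc, jepi_comp, ← Category.assoc, jfac₁_comp, jfac₁_comp]
  ext i : 3
  exact jincl_injective _ _ (congr_arg (fun (w : a ⟶ b) => w.toOrderHom i) h)

lemma jfac₂_jepi : jfac₂ f' g' ≫ jepi φ f' g' = jfac₂ (f' ≫ φ) (g' ≫ φ) := by
  have h : (jfac₂ f' g' ≫ jepi φ f' g') ≫ jincl (f' ≫ φ) (g' ≫ φ) =
      jfac₂ (f' ≫ φ) (g' ≫ φ) ≫ jincl (f' ≫ φ) (g' ≫ φ) := by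
    rw [Category.assoc, jepi_comp, ← Category.assoc, jfac₂_comp, jfac₂_comp]
  ext i : 3
  exact jincl_injective _ _ (congr_arg (fun (w : a ⟶ b) => w.toOrderHom i) h)

end Rel
end JointImage

section NormalForm

variable {a b b' : SimplexCategory}

/-- the normal form of a triple `(x, f, g)` -/
noncomputable def nf (f g : a ⟶ b) (x : Z.obj (op b)) :
    Σ (p : SimplexCategory), (a ⟶ p) × (a ⟶ p) × Z.obj (op p) :=
  ⟨(ez Z (Z.map (jincl f g).op x)).1,
    jfac₁ f g ≫ (ez Z (Z.map (jincl f g).op x)).2.1,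
    jfac₂ f g ≫ (ez Z (Z.map (jincl f g).op x)).2.1,
    (ez Z (Z.map (jincl f g).op x)).2.2⟩

lemma nf_invariant (φ : b' ⟶ b) (f' g' : a ⟶ b') (x : Z.obj (op b)) :
    nf Z (f' ≫ φ) (g' ≫ φ) x = nf Z f' g' (Z.map φ.op x) := by
  obtain ⟨hs, hnd, heq⟩ := ez_spec Z (Z.map (jincl (f' ≫ φ) (g' ≫ φ)).op x)
  set E := ez Z (Z.map (jincl (f' ≫ φ) (g' ≫ φ)).op x) with hE
  have hx1' : Z.map (jincl f' g').op (Z.map φ.op x) =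
      Z.map (jepi φ f' g').op (Z.map (jincl (f' ≫ φ) (g' ≫ φ)).op x) := by
    rw [← types_comp_apply (Z.map φ.op) (Z.map (jincl f' g').op), ← Z.map_comp, ← op_comp,
      ← jepi_comp, op_comp, Z.map_comp]
    rfl
  have hez' : ez Z (Z.map (jincl f' g').op (Z.map φ.op x)) =
      ⟨E.1, jepi φ f' g' ≫ E.2.1, E.2.2⟩ := by
    apply ez_eq Z _ _ (surj_comp (jepi_surjective φ f' g') hs) hnd
    rw [hx1', heq, op_comp, Z.map_comp]
    rfl
  show (⟨E.1, jfac₁ (f' ≫ φ) (g' ≫ φ) ≫ E.2.1, jfac₂ (f' ≫ φ) (g' ≫ φ) ≫ E.2.1, E.2.2⟩ :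
    Σ (p : SimplexCategory), (a ⟶ p) × (a ⟶ p) × Z.obj (op p)) = _
  rw [nf, hez']
  rw [← jfac₁_jepi φ f' g', ← jfac₂_jepi φ f' g', Category.assoc, Category.assoc]

lemma nf_map {X Y : SSet} (u : X ⟶ Y) (hu : ∀ c, Function.Injective (u.app c))
    (f g : a ⟶ b) (x : X.obj (op b)) :
    nf Y f g (u.app (op b) x) =
      ⟨(nf X f g x).1, (nf X f g x).2.1, (nf X f g x).2.2.1,
        u.app (op (nf X f g x).1) (nf X f g x).2.2.2⟩ := by
  obtain ⟨hs, hnd, heq⟩ := ez_spec X (X.map (jincl f g).op x)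
  set E := ez X (X.map (jincl f g).op x) with hE
  have hnat : Y.map (jincl f g).op (u.app (op b) x) =
      u.app (op (SimplexCategory.mk (jlen f g))) (X.map (jincl f g).op x) :=
    (ConcreteCategory.congr_hom (u.naturality (jincl f g).op) x).symm
  have hez' : ez Y (Y.map (jincl f g).op (u.app (op b) x)) =
      ⟨E.1, E.2.1, u.app (op E.1) E.2.2⟩ := by
    apply ez_eq Y _ _ hs (nonDeg_map u hu hnd)
    rw [hnat, heq]
    simpa using congr_fun (u.naturality (E.2.1).op) E.2.2
  rw [nf, nf, hez']

end NormalForm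

section Colimit

variable (a : SimplexCategory)

/-- the costructured arrow category indexing the pointwise Kan extension -/
abbrev JJ := CostructuredArrow (Functor.diag SimplexCategoryᵒᵖ) (op a, op a)

/-- the diagram whose colimit computes `δ*δ_! Z` at `a` -/
abbrev DD (Z : SSet) : JJ a ⥤ Type :=
  CostructuredArrow.proj (Functor.diag SimplexCategoryᵒᵖ) (op a, op a) ⋙ Z

/-- objects of the indexing category -/
abbrev jobj {b : SimplexCategory} (f g : a ⟶ b) : JJ a :=
  CostructuredArrow.mk (Y := op b) ((f.op, g.op) :
    (Functor.diag SimplexCategoryᵒᵖ).obj (op b) ⟶ (op a, op a))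

/-- realization of the normal form: every generator is equivalent to its normal form -/
lemma realization {b : SimplexCategory} (f g : a ⟶ b) (x : Z.obj (op b)) :
    colimit.ι (DD a Z) (jobj a f g) x =
      colimit.ι (DD a Z) (jobj a (nf Z f g x).2.1 (nf Z f g x).2.2.1) (nf Z f g x).2.2.2 := by
  obtain ⟨hs, hnd, heq⟩ := ez_spec Z (Z.map (jincl f g).op x)
  set E := ez Z (Z.map (jincl f g).op x) with hE
  have step1 : colimit.ι (DD a Z) (jobj a f g) x =
      colimit.ι (DD a Z) (jobj a (jfac₁ f g) (jfac₂ f g)) (Z.map (jincl f g).op x) := by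
    refine Types.colimit_sound (CostructuredArrow.homMk (jincl f g).op ?_) rfl
    apply Prod.ext
    · show (jincl f g).op ≫ (jfac₁ f g).op = f.op
      rw [← op_comp, jfac₁_comp]
    · show (jincl f g).op ≫ (jfac₂ f g).op = g.op
      rw [← op_comp, jfac₂_comp]
  have step2 : colimit.ι (DD a Z) (jobj a (jfac₁ f g ≫ E.2.1) (jfac₂ f g ≫ E.2.1)) E.2.2 =
      colimit.ι (DD a Z) (jobj a (jfac₁ f g) (jfac₂ f g)) (Z.map (jincl f g).op x) := by
    refine Types.colimit_sound (CostructuredArrow.homMk (E.2.1).op ?_) ?_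
    · apply Prod.ext
      · show (E.2.1).op ≫ (jfac₁ f g).op = (jfac₁ f g ≫ E.2.1).op
        rw [← op_comp]
      · show (E.2.1).op ≫ (jfac₂ f g).op = (jfac₂ f g ≫ E.2.1).op
        rw [← op_comp]
    · exact heq.symm
  rw [step1, ← step2]
  rfl

/-- the invariant on the colimit diagram -/
noncomputable def Phi (s : Σ (j : JJ a), (DD a Z).obj j) :
    Σ (p : SimplexCategory), (a ⟶ p) × (a ⟶ p) × Z.obj (op p) :=
  nf Z (s.1.hom.1.unop) (s.1.hom.2.unop) s.2

lemma Phi_invariant (s t : Σ (j : JJ a), (DD a Z).obj j)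
    (h : Relation.EqvGen (Functor.ColimitTypeRel (DD a Z)) s t) :
    Phi Z a s = Phi Z a t := by
  induction h with
  | rel s t hst =>
    obtain ⟨u, hu⟩ := hst
    have hw1 : s.1.hom.1.unop = t.1.hom.1.unop ≫ u.left.unop := by
      have := congr_arg (fun (w : (Functor.diag SimplexCategoryᵒᵖ).obj s.1.left ⟶ (op a, op a))
        => w.1.unop) u.w
      simpa using this.symm
    have hw2 : s.1.hom.2.unop = t.1.hom.2.unop ≫ u.left.unop := by
      have := congr_arg (fun (w : (Functor.diag SimplexCategoryᵒᵖ).obj s.1.left ⟶ (op a, op a))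
        => w.2.unop) u.w
      simpa using this.symm
    show nf Z (s.1.hom.1.unop) (s.1.hom.2.unop) s.2
      = nf Z (t.1.hom.1.unop) (t.1.hom.2.unop) t.2
    rw [hu]
    calc nf Z (s.1.hom.1.unop) (s.1.hom.2.unop) s.2
        = nf Z (t.1.hom.1.unop ≫ u.left.unop) (t.1.hom.2.unop ≫ u.left.unop) s.2 := by
          rw [← hw1, ← hw2]
      _ = nf Z (t.1.hom.1.unop) (t.1.hom.2.unop) (Z.map u.left.unop.op s.2) :=
          nf_invariant Z u.left.unop _ _ s.2
      _ = _ := rfl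
  | refl => rfl
  | symm _ _ _ ih => exact ih.symm
  | trans _ _ _ _ _ ih1 ih2 => exact ih1.trans ih2

lemma jobj_eta (j : JJ a) : jobj a (j.hom.1.unop) (j.hom.2.unop) = j := by
  cases j
  rfl

lemma realization' {Z : SSet} (j : JJ a) (x : (DD a Z).obj j) :
    colimit.ι (DD a Z) j x =
      colimit.ι (DD a Z)
        (jobj a (nf Z (j.hom.1.unop) (j.hom.2.unop) x).2.1
          (nf Z (j.hom.1.unop) (j.hom.2.unop) x).2.2.1)
        (nf Z (j.hom.1.unop) (j.hom.2.unop) x).2.2.2 := by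
  cases j
  exact realization Z a _ _ x

lemma ι_inj {X Y : SSet} (u : X ⟶ Y) (hu : ∀ c, Function.Injective (u.app c))
    (jj jj' : JJ a) (x : (DD a X).obj jj) (x' : (DD a X).obj jj')
    (h : colimit.ι (DD a Y) jj (u.app jj.left x) = colimit.ι (DD a Y) jj' (u.app jj'.left x')) :
    colimit.ι (DD a X) jj x = colimit.ι (DD a X) jj' x' := by
  have hPhi : Phi Y a ⟨jj, u.app jj.left x⟩ = Phi Y a ⟨jj', u.app jj'.left x'⟩ :=
    Phi_invariant Y a _ _ (Types.colimit_eq h)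
  have hPhi' : nf Y (jj.hom.1.unop) (jj.hom.2.unop) (u.app (op jj.left.unop) x)
      = nf Y (jj'.hom.1.unop) (jj'.hom.2.unop) (u.app (op jj'.left.unop) x') := hPhi
  have e1 := nf_map u hu (jj.hom.1.unop) (jj.hom.2.unop) x
  have e2 := nf_map u hu (jj'.hom.1.unop) (jj'.hom.2.unop) x'
  have hPhi'' := e1.symm.trans (hPhi'.trans e2)
  have key : nf X (jj.hom.1.unop) (jj.hom.2.unop) x
      = nf X (jj'.hom.1.unop) (jj'.hom.2.unop) x' := by
    rcases hP : nf X (jj.hom.1.unop) (jj.hom.2.unop) x with ⟨p, F, G, w⟩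
    rcases hP' : nf X (jj'.hom.1.unop) (jj'.hom.2.unop) x' with ⟨p', F', G', w'⟩
    rw [hP, hP'] at hPhi''
    dsimp only at hPhi''
    injection hPhi'' with h1 h2
    subst h1
    rw [heq_iff_eq] at h2
    simp only [Prod.mk.injEq] at h2
    obtain ⟨hF, hG, hw⟩ := h2
    have hww : w = w' := hu _ hw
    rw [hF, hG, hww]
  rw [realization' a jj x, realization' a jj' x', key]

end Colimit

end Aux

open Aux

noncomputable def eIso (Z : SSet) (a : SimplexCategory) :
    (simplexDiag.leftKanExtension Z).obj (op a, op a) ≅ colimit (DD a Z) :=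
  simplexDiag.leftKanExtensionObjIsoColimit Z (op a, op a)

lemma comm_lemma {Z W : SSet} (v : Z ⟶ W) (a : SimplexCategory) (jj : JJ a)
    (z : (DD a Z).obj jj) :
    (simplexDiag.lan.map v).app (op a, op a) ((eIso Z a).inv (colimit.ι (DD a Z) jj z)) =
      (eIso W a).inv (colimit.ι (DD a W) jj (v.app jj.left z)) := by
  have h1 := ConcreteCategory.congr_hom (simplexDiag.ι_leftKanExtensionObjIsoColimit_inv Z (op a, op a) jj) z
  have h4 := ConcreteCategory.congr_hom (simplexDiag.ι_leftKanExtensionObjIsoColimit_inv W (op a, op a) jj)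
    (v.app jj.left z)
  simp only [types_comp_apply] at h1 h4
  rw [eIso, h1, eIso]; refine Eq.trans ?_ h4.symm
  have h2 := ConcreteCategory.congr_hom ((simplexDiag.lan.map v).naturality jj.hom)
    ((simplexDiag.leftKanExtensionUnit Z).app jj.left z)
  have h3 := ConcreteCategory.congr_hom (congr_app (simplexDiag.lanUnit.naturality v) jj.left) z
  rw [NatTrans.comp_app, NatTrans.comp_app] at h3
  exact h2.trans (congrArg (fun t => (simplexDiag.lan.obj W).map jj.hom t) h3.symm)

/-- The composite `δ*δ_! : sSet ⥤ sSet` preserves monomorphisms of simplicial sets. -/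
theorem diag_lan_comp_restriction_preservesMonomorphisms :
    (simplexDiag.lan ⋙
      (Functor.whiskeringLeft SimplexCategoryᵒᵖ (SimplexCategoryᵒᵖ × SimplexCategoryᵒᵖ)
        (Type)).obj simplexDiag : SSet ⥤ SSet).PreservesMonomorphisms := by
  refine ⟨fun {X Y} u hu => ?_⟩
  have huinj : ∀ c, Function.Injective (u.app c) := fun c =>
    (mono_iff_injective _).mp (((NatTrans.mono_iff_mono_app' (D := Type) u).mp hu) c)
  rw [NatTrans.mono_iff_mono_app' (D := Type)]
  intro c
  rw [CategoryTheory.mono_iff_injective]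
  show Function.Injective ((simplexDiag.lan.map u).app (op c.unop, op c.unop))
  set a := c.unop
  intro w w' hww'
  obtain ⟨jj, z, hz⟩ := Types.jointly_surjective' ((eIso X a).hom w)
  obtain ⟨jj', z', hz'⟩ := Types.jointly_surjective' ((eIso X a).hom w')
  have hwz : w = (eIso X a).inv (colimit.ι (DD a X) jj z) := by
    rw [hz]
    exact (ConcreteCategory.congr_hom (eIso X a).hom_inv_id w).symm
  have hwz' : w' = (eIso X a).inv (colimit.ι (DD a X) jj' z') := by
    rw [hz']
    exact (ConcreteCategory.congr_hom (eIso X a).hom_inv_id w').symm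
  rw [hwz, hwz'] at hww'
  rw [comm_lemma u a jj z, comm_lemma u a jj' z'] at hww'
  have hcol : colimit.ι (DD a Y) jj (u.app jj.left z) =
      colimit.ι (DD a Y) jj' (u.app jj'.left z') := by
    have := congr_arg (eIso Y a).hom hww'
    rwa [← types_comp_apply (eIso Y a).inv (eIso Y a).hom,
      ← types_comp_apply (eIso Y a).inv (eIso Y a).hom, (eIso Y a).inv_hom_id] at this
  rw [hwz, hwz']
  exact congr_arg (eIso X a).inv (ι_inj a u huinj jj jj' z z' hcol)

end Paper
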